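/- Let n ≥ 2 and let f : ℝⁿ → R̄ⁿ be continuous with respect to the chordal distance q. Suppose there exist r > 0 and δ > 0 such that diam_q( f({y : |y − x| ≤ r}) ) ≥ δ for every x ∈ ℝⁿ. If (x_k) is a sequence in ℝⁿ and F : ℝⁿ → R̄ⁿ is such that the maps x ↦ f(x + x_k) converge to F uniformly with respect to q on every compact subset of ℝⁿ, then F is not constant. -/

import Mathlib

open Filter Topology Set
open scoped ENNReal NNReal

noncomputable section

/-- `E n` is the Euclidean space `ℝⁿ`. -/
abbrev E (n : ℕ) := EuclideanSpace ℝ (Fin n)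

/-- `RS n` is the one-point compactification `R̄ⁿ = ℝⁿ ∪ {∞}`, with `none` playing
the role of the point `∞`. -/
abbrev RS (n : ℕ) := Option (E n)

/-- The chordal (spherical) distance `q` on `R̄ⁿ`. -/
noncomputable def chordal {n : ℕ} : RS n → RS n → ℝ
  | some a, some b => ‖a - b‖ / (Real.sqrt (1 + ‖a‖ ^ 2) * Real.sqrt (1 + ‖b‖ ^ 2))
  | some a, none => 1 / Real.sqrt (1 + ‖a‖ ^ 2)
  | none, some b => 1 / Real.sqrt (1 + ‖b‖ ^ 2)
  | none, none => 0

/-- The chordal diameter of a subset of `R̄ⁿ`. -/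
noncomputable def qdiam {n : ℕ} (S : Set (RS n)) : ℝ :=
  sSup {d | ∃ a ∈ S, ∃ b ∈ S, d = chordal a b}

/-- The weighted ball `B_p(a, r) = {x : |x - a| < r |a|^(2-p)}`. -/
def Bp {n : ℕ} (p : ℝ) (a : E n) (r : ℝ) : Set (E n) :=
  {x | ‖x - a‖ < r * ‖a‖ ^ (2 - p)}

/-- `Qq α g x = limsup_{h → 0, h ≠ 0} q(g(x+h), g(x)) / |h|^α ∈ [0,∞]`. -/
noncomputable def Qq {n : ℕ} (α : ℝ) (g : E n → RS n) (x : E n) : ℝ≥0∞ :=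
  Filter.limsup (fun h : E n => ENNReal.ofReal (chordal (g (x + h)) (g x) / ‖h‖ ^ α))
    (𝓝[≠] (0 : E n))

/-- `(x_m)` is an `M_p`-sequence for `f` with parameter `l`:  `x_m ∈ ℝⁿ \ {0}`,
`|x_m| → ∞`, and for every subsequence and every `δ > 0` the set of values
`c ∈ R̄ⁿ` attained only finitely often by `f` in `⋃_k B_p(x_{m_k}, δ)` has at
most `l` elements. -/
def MpSeq {n : ℕ} (p : ℝ) (l : ℕ) (f : E n → RS n) (x : ℕ → E n) : Prop :=
  (∀ m, x m ≠ 0) ∧ Tendsto (fun m => ‖x m‖) atTop atTop ∧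
    ∀ φ : ℕ → ℕ, StrictMono φ → ∀ δ : ℝ, 0 < δ →
      {c : RS n | (f ⁻¹' {c} ∩ ⋃ k, Bp p (x (φ k)) δ).Finite}.Finite ∧
      {c : RS n | (f ⁻¹' {c} ∩ ⋃ k, Bp p (x (φ k)) δ).Finite}.ncard ≤ l

/-- `(x_m)` is a `μ_p`-sequence for `f` with parameter `l`: `x_m ∈ ℝⁿ \ {0}`,
`|x_m| → ∞`, and there are monotone decreasing null sequences `(L_m)`, `(r_m)` of
positive numbers such that `f(B_p(x_m, r_m))` covers `R̄ⁿ` except possibly `l`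
sets of chordal diameter at most `L_m`. -/
def MuSeq {n : ℕ} (p : ℝ) (l : ℕ) (f : E n → RS n) (x : ℕ → E n) : Prop :=
  (∀ m, x m ≠ 0) ∧ Tendsto (fun m => ‖x m‖) atTop atTop ∧
    ∃ L r : ℕ → ℝ, (∀ m, 0 < L m) ∧ (∀ m, 0 < r m) ∧ Antitone L ∧ Antitone r ∧
      Tendsto L atTop (𝓝 0) ∧ Tendsto r atTop (𝓝 0) ∧
      ∀ m, ∃ Es : Fin l → Set (RS n), (∀ j, qdiam (Es j) ≤ L m) ∧
        ∀ c : RS n, c ∉ ⋃ j, Es j → c ∈ f '' Bp p (x m) (r m)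

/-- Continuity of `g : ℝⁿ → R̄ⁿ` at a point, with respect to the chordal distance. -/
def QContinuousAt {n : ℕ} (g : E n → RS n) (x₀ : E n) : Prop :=
  ∀ ε : ℝ, 0 < ε → ∃ δ : ℝ, 0 < δ ∧ ∀ z : E n, ‖z - x₀‖ < δ → chordal (g z) (g x₀) < ε

/-- Stereographic-type embedding of `R̄ⁿ` into `ℝⁿ ×₂ ℝ`. -/
noncomputable def sigmaRS {n : ℕ} : RS n → WithLp 2 (E n × ℝ)
  | some a => (WithLp.equiv 2 _).symm ((1 + ‖a‖ ^ 2)⁻¹ • a, ‖a‖ ^ 2 / (1 + ‖a‖ ^ 2))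
  | none => (WithLp.equiv 2 _).symm (0, 1)

lemma one_add_sq_pos {n : ℕ} (a : E n) : (0:ℝ) < 1 + ‖a‖ ^ 2 := by positivity

lemma chordal_nonneg {n : ℕ} (a b : RS n) : 0 ≤ chordal a b := by
  cases a <;> cases b <;> simp [chordal] <;> positivity

lemma chordal_eq_norm {n : ℕ} (a b : RS n) :
    chordal a b = ‖sigmaRS a - sigmaRS b‖ := by
  have key : ∀ u v : RS n, chordal u v ^ 2 = ‖sigmaRS u - sigmaRS v‖ ^ 2 → chordal u v = ‖sigmaRS u - sigmaRS v‖ := by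
    intro u v h
    have h1 := chordal_nonneg u v
    have h2 : (0:ℝ) ≤ ‖sigmaRS u - sigmaRS v‖ := norm_nonneg _
    nlinarith [sq_nonneg (chordal u v - ‖sigmaRS u - sigmaRS v‖)]
  apply key
  cases a with
  | none => cases b with
    | none => simp [chordal, sigmaRS]
    | some b =>
      have hB := one_add_sq_pos b
      rw [sigmaRS, sigmaRS, WithLp.equiv_symm_apply, ← WithLp.toLp_sub, WithLp.prod_norm_sq_eq_of_L2]
      simp only [WithLp.toLp_fst, WithLp.toLp_snd, Prod.fst_sub, Prod.snd_sub,
        Prod.mk_sub_mk]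
      rw [zero_sub, norm_neg, norm_smul, chordal]
      rw [div_pow, one_pow, Real.sq_sqrt (le_of_lt hB)]
      rw [mul_pow, norm_inv, Real.norm_eq_abs, abs_of_pos hB, ← Real.rpow_natCast _ 2]
      simp only [Real.norm_eq_abs, sq_abs]
      field_simp
      ring
  | some a => cases b with
    | none =>
      have hA := one_add_sq_pos a
      rw [sigmaRS, sigmaRS, WithLp.equiv_symm_apply, ← WithLp.toLp_sub, WithLp.prod_norm_sq_eq_of_L2]
      simp only [WithLp.toLp_fst, WithLp.toLp_snd, Prod.fst_sub, Prod.snd_sub,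
        Prod.mk_sub_mk]
      rw [sub_zero, norm_smul, chordal]
      rw [div_pow, one_pow, Real.sq_sqrt (le_of_lt hA)]
      rw [mul_pow, norm_inv, Real.norm_eq_abs, abs_of_pos hA]
      simp only [Real.norm_eq_abs, sq_abs]
      field_simp
      ring
    | some b =>
      have hA := one_add_sq_pos a
      have hB := one_add_sq_pos b
      rw [sigmaRS, sigmaRS, WithLp.equiv_symm_apply, ← WithLp.toLp_sub, WithLp.prod_norm_sq_eq_of_L2]
      simp only [WithLp.toLp_fst, WithLp.toLp_snd, Prod.fst_sub, Prod.snd_sub,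
        Prod.mk_sub_mk]
      rw [chordal, div_pow, mul_pow, Real.sq_sqrt (le_of_lt hA), Real.sq_sqrt (le_of_lt hB)]
      rw [norm_sub_sq_real, norm_sub_sq_real, norm_smul, norm_smul,
        real_inner_smul_left, real_inner_smul_right]
      rw [norm_inv, norm_inv, Real.norm_eq_abs, Real.norm_eq_abs, abs_of_pos hA, abs_of_pos hB]
      rw [Real.norm_eq_abs, sq_abs]
      field_simp
      ring

lemma chordal_triangle {n : ℕ} (a b c : RS n) :
    chordal a b ≤ chordal a c + chordal c b := by
  rw [chordal_eq_norm, chordal_eq_norm, chordal_eq_norm]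
  exact norm_sub_le_norm_sub_add_norm_sub _ _ _

lemma chordal_symm {n : ℕ} (a b : RS n) : chordal a b = chordal b a := by
  rw [chordal_eq_norm, chordal_eq_norm, norm_sub_rev]

/-- Let `f : ℝⁿ → R̄ⁿ` be continuous w.r.t. the chordal distance and
suppose `diam_q(f(closed ball(x, r))) ≥ δ` for all `x` (with fixed `r, δ > 0`). If the
translates `x ↦ f(x + x_k)` converge to `F` uniformly on every compact set, then `F`
is not constant. -/
theorem stmt_12 (n : ℕ) (hn : 2 ≤ n) (f : E n → RS n)
    (hf : ∀ x : E n, QContinuousAt f x)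
    (r δ : ℝ) (hr : 0 < r) (hδ : 0 < δ)
    (hlow : ∀ x : E n, δ ≤ qdiam (f '' {y | ‖y - x‖ ≤ r}))
    (x : ℕ → E n) (F : E n → RS n)
    (hconv : ∀ K : Set (E n), IsCompact K → ∀ ε : ℝ, 0 < ε → ∃ N : ℕ, ∀ k ≥ N, ∀ z ∈ K,
      chordal (f (z + x k)) (F z) < ε) :
    ¬ ∃ c : RS n, ∀ z : E n, F z = c := by
  rintro ⟨c, hc⟩
  obtain ⟨N, hN⟩ := hconv (Metric.closedBall 0 r) (isCompact_closedBall 0 r) (δ / 3)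
    (by linarith)
  have hclose : ∀ y : E n, ‖y - x N‖ ≤ r → chordal (f y) c < δ / 3 := by
    intro y hy
    have hz : y - x N ∈ Metric.closedBall (0 : E n) r := by
      simpa [Metric.mem_closedBall, dist_zero_right] using hy
    have := hN N le_rfl (y - x N) hz
    rwa [sub_add_cancel, hc] at this
  have hsup : qdiam (f '' {y | ‖y - x N‖ ≤ r}) ≤ 2 * δ / 3 := by
    apply Real.sSup_le
    · rintro d ⟨a, ⟨y₁, hy₁, rfl⟩, b, ⟨y₂, hy₂, rfl⟩, rfl⟩
      have h1 := hclose y₁ hy₁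
      have h2 := hclose y₂ hy₂
      have := chordal_triangle (f y₁) (f y₂) c
      rw [chordal_symm c (f y₂)] at this
      linarith
    · positivity
  have := hlow (x N)
  linarith
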